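/- If p is an odd prime and α(p^2) ≠ α(p), then for all s ≥ 1, α(p^s) = p^(s-1)·α(p), where α(k) is the least positive integer n with k ∣ F(n). -/

import Mathlib

lemma fib_key (u m : ℕ) : ∃ k f : ℤ,
    (Nat.fib ((m+2)*(u+1)) : ℤ) =
      (m+2) * (Nat.fib u : ℤ)^(m+1) * (Nat.fib (u+1) : ℤ)
      + ((m+2).choose 2 : ℤ) * (Nat.fib u : ℤ)^m * (Nat.fib (u+1) : ℤ)^2
      + k * (Nat.fib (u+1) : ℤ)^3
    ∧ (Nat.fib ((m+2)*(u+1)+1) : ℤ) =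
      (Nat.fib u : ℤ)^(m+2) + (m+2) * (Nat.fib u : ℤ)^(m+1) * (Nat.fib (u+1) : ℤ)
      + f * (Nat.fib (u+1) : ℤ)^2 := by
  induction m with
  | zero =>
    refine ⟨0, 2, ?_, ?_⟩
    · have h : 2*(u+1) = (u+1) + u + 1 := by ring
      rw [h, Nat.fib_add, show u + 1 + 1 = u + 2 from rfl, Nat.fib_add_two]
      simp only [Nat.choose_self]
      push_cast; ring
    · have h : 2*(u+1)+1 = (u+1) + (u+1) + 1 := by ring
      rw [h, Nat.fib_add, show u + 1 + 1 = u + 2 from rfl, Nat.fib_add_two]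
      push_cast; ring
  | succ m ih =>
    obtain ⟨k, f, hA, hB⟩ := ih
    set d : ℤ := (Nat.fib u : ℤ)
    set x : ℤ := (Nat.fib (u+1) : ℤ)
    refine ⟨k * d + f, f * d + 2*(m+2)*d^(m+1) + (f + ((m+2).choose 2 : ℤ)*d^m + k*x)*x, ?_, ?_⟩
    · have r1 : Nat.fib ((m+3)*(u+1)) =
          Nat.fib ((m+2)*(u+1)) * Nat.fib u + Nat.fib ((m+2)*(u+1)+1) * Nat.fib (u+1) := by
        have : (m+3)*(u+1) = (m+2)*(u+1) + u + 1 := by ring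
        rw [this, Nat.fib_add]
      have hc : ((m+3).choose 2 : ℤ) = ((m+2).choose 2 : ℤ) + (m+2 : ℤ) := by
        have := Nat.choose_succ_succ (m+2) 1
        simp [Nat.choose_one_right] at this
        push_cast [this]; ring
      have : ((Nat.fib ((m+3)*(u+1)) : ℤ)) = (Nat.fib ((m+2)*(u+1)) : ℤ) * d + (Nat.fib ((m+2)*(u+1)+1) : ℤ) * x := by
        rw [r1]; push_cast; ring
      rw [show m + 1 + 2 = m + 3 from rfl, this, hA, hB, hc]
      push_cast; ring
    · have r2 : Nat.fib ((m+3)*(u+1)+1) =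
          Nat.fib ((m+2)*(u+1)+1) * Nat.fib u + Nat.fib ((m+2)*(u+1)+2) * Nat.fib (u+1) := by
        have h1 : (m+3)*(u+1)+1 = ((m+2)*(u+1)+1) + u + 1 := by ring
        rw [h1, Nat.fib_add]
      have r3 : Nat.fib ((m+2)*(u+1)+2) = Nat.fib ((m+2)*(u+1)) + Nat.fib ((m+2)*(u+1)+1) :=
        Nat.fib_add_two
      have : ((Nat.fib ((m+3)*(u+1)+1) : ℤ)) =
          (Nat.fib ((m+2)*(u+1)+1) : ℤ) * d + ((Nat.fib ((m+2)*(u+1)) : ℤ) + (Nat.fib ((m+2)*(u+1)+1) : ℤ)) * x := by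
        rw [r2, r3]; push_cast; ring
      rw [show m + 1 + 2 = m + 3 from rfl, this, hA, hB]
      push_cast; ring


lemma rank_dvd {k a : ℕ} (h : IsLeast {n : ℕ | 0 < n ∧ k ∣ Nat.fib n} a)
    {n : ℕ} (hn : 0 < n) (hd : k ∣ Nat.fib n) : a ∣ n := by
  obtain ⟨⟨ha0, hak⟩, hlb⟩ := h
  have hg : k ∣ Nat.fib (Nat.gcd a n) := by
    rw [Nat.fib_gcd]; exact Nat.dvd_gcd hak hd
  have hg0 : 0 < Nat.gcd a n := Nat.gcd_pos_of_pos_left _ ha0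
  have h1 : a ≤ Nat.gcd a n := hlb ⟨hg0, hg⟩
  have h2 : Nat.gcd a n ∣ a := Nat.gcd_dvd_left a n
  have heq : Nat.gcd a n = a := le_antisymm (Nat.le_of_dvd ha0 h2) h1
  rw [← heq]; exact Nat.gcd_dvd_right a n

lemma step_up (p s u : ℕ) (hp : p.Prime) (hodd : Odd p) (hs : 1 ≤ s)
    (hd : ¬ p ∣ Nat.fib u) (h1 : p^s ∣ Nat.fib (u+1)) (h2 : ¬ p^(s+1) ∣ Nat.fib (u+1)) :
    p^(s+1) ∣ Nat.fib (p*(u+1)) ∧ ¬ p^(s+2) ∣ Nat.fib (p*(u+1)) := by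
  have hp3 : 3 ≤ p := by
    have h2p := hp.two_le
    have := Nat.odd_iff.mp hodd
    omega
  obtain ⟨s', rfl⟩ : ∃ s', s = s' + 1 := ⟨s - 1, by omega⟩
  obtain ⟨m, rfl⟩ : ∃ m, p = m + 2 := ⟨p - 2, by omega⟩
  obtain ⟨k, f, hA, -⟩ := fib_key u m
  have hx : ((m:ℤ)+2)^(s'+1) ∣ (Nat.fib (u+1) : ℤ) := by exact_mod_cast h1
  obtain ⟨y, hy⟩ := hx
  obtain ⟨c, hc⟩ : ∃ c : ℤ, ((m+2).choose 2 : ℤ) = ((m:ℤ)+2) * c := by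
    have : ((m+2):ℕ) ∣ (m+2).choose 2 := hp.dvd_choose_self (by norm_num) (by omega)
    obtain ⟨c, hc⟩ := this
    exact ⟨(c:ℤ), by exact_mod_cast hc⟩
  constructor
  · have key1 : ((m:ℤ)+2)^(s'+2) ∣ (Nat.fib ((m+2)*(u+1)) : ℤ) := by
      refine ⟨(Nat.fib u : ℤ)^(m+1)*y + ((m:ℤ)+2)^(s'+1)*c*(Nat.fib u : ℤ)^m*y^2
        + ((m:ℤ)+2)^(2*s'+1)*k*y^3, ?_⟩
      rw [hA, hc, hy]; push_cast; ring
    exact_mod_cast key1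
  · intro hcon
    have hconZ : ((m:ℤ)+2)^(s'+3) ∣ (Nat.fib ((m+2)*(u+1)) : ℤ) := by exact_mod_cast hcon
    have t23 : ((m:ℤ)+2)^(s'+3) ∣
        ((m+2).choose 2 : ℤ) * (Nat.fib u : ℤ)^m * (Nat.fib (u+1) : ℤ)^2
        + k * (Nat.fib (u+1) : ℤ)^3 := by
      refine ⟨((m:ℤ)+2)^s'*c*(Nat.fib u : ℤ)^m*y^2 + ((m:ℤ)+2)^(2*s')*k*y^3, ?_⟩
      rw [hc, hy]; ring
    have ht1 : ((m:ℤ)+2)^(s'+3) ∣ ((m:ℤ)+2) * (Nat.fib u : ℤ)^(m+1) * (Nat.fib (u+1) : ℤ) := by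
      have := hconZ.sub t23
      rw [hA] at this
      convert this using 1
      exacts [rfl, by ring]
    have ht1' : ((m:ℤ)+2)^(s'+2) ∣ (Nat.fib u : ℤ)^(m+1) * (Nat.fib (u+1) : ℤ) := by
      have hq : ((m:ℤ)+2) ≠ 0 := by positivity
      have : ((m:ℤ)+2) * ((m:ℤ)+2)^(s'+2) ∣ ((m:ℤ)+2) * ((Nat.fib u : ℤ)^(m+1) * (Nat.fib (u+1) : ℤ)) := by
        have e1 : ((m:ℤ)+2) * ((m:ℤ)+2)^(s'+2) = ((m:ℤ)+2)^(s'+3) := by ring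
        have e2 : ((m:ℤ)+2) * ((Nat.fib u : ℤ)^(m+1) * (Nat.fib (u+1) : ℤ))
            = ((m:ℤ)+2) * (Nat.fib u : ℤ)^(m+1) * (Nat.fib (u+1) : ℤ) := by ring
        rw [e1, e2]; exact ht1
      exact (mul_dvd_mul_iff_left hq).mp this
    have hnat : (m+2)^(s'+2) ∣ Nat.fib u^(m+1) * Nat.fib (u+1) := by exact_mod_cast ht1'
    have hcop : Nat.Coprime ((m+2)^(s'+2)) (Nat.fib u^(m+1)) :=
      Nat.Coprime.pow _ _ (hp.coprime_iff_not_dvd.mpr hd)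
    exact h2 (hcop.dvd_of_dvd_mul_left hnat)

lemma no_jump (p s u m : ℕ) (hp : p.Prime) (hs : 1 ≤ s) (hm : 0 < m) (hpm : ¬ p ∣ m)
    (hd : ¬ p ∣ Nat.fib u) (h1 : p^s ∣ Nat.fib (u+1)) (h2 : ¬ p^(s+1) ∣ Nat.fib (u+1)) :
    ¬ p^(s+1) ∣ Nat.fib (m*(u+1)) := by
  rcases Nat.lt_or_ge m 2 with hm2 | hm2
  · interval_cases m
    · simpa using h2
  obtain ⟨s', rfl⟩ : ∃ s', s = s' + 1 := ⟨s - 1, by omega⟩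
  obtain ⟨m', rfl⟩ : ∃ m', m = m' + 2 := ⟨m - 2, by omega⟩
  obtain ⟨k, f, hA, -⟩ := fib_key u m'
  have hx : (p:ℤ)^(s'+1) ∣ (Nat.fib (u+1) : ℤ) := by exact_mod_cast h1
  obtain ⟨y, hy⟩ := hx
  intro hcon
  have hconZ : (p:ℤ)^(s'+2) ∣ (Nat.fib ((m'+2)*(u+1)) : ℤ) := by exact_mod_cast hcon
  have t23 : (p:ℤ)^(s'+2) ∣
      ((m'+2).choose 2 : ℤ) * (Nat.fib u : ℤ)^m' * (Nat.fib (u+1) : ℤ)^2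
      + k * (Nat.fib (u+1) : ℤ)^3 := by
    refine ⟨(p:ℤ)^s'*((m'+2).choose 2 : ℤ)*(Nat.fib u : ℤ)^m'*y^2 + (p:ℤ)^(2*s'+1)*k*y^3, ?_⟩
    rw [hy]; ring
  have ht1 : (p:ℤ)^(s'+2) ∣ ((m':ℤ)+2) * (Nat.fib u : ℤ)^(m'+1) * (Nat.fib (u+1) : ℤ) := by
    have := hconZ.sub t23
    rw [hA] at this
    convert this using 1
    exacts [rfl, by push_cast; ring]
  have hnat : p^(s'+2) ∣ ((m'+2) * Nat.fib u^(m'+1)) * Nat.fib (u+1) := by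
    exact_mod_cast ht1
  have hcop : Nat.Coprime (p^(s'+2)) ((m'+2) * Nat.fib u^(m'+1)) := by
    have c1 : Nat.Coprime p (m'+2) := hp.coprime_iff_not_dvd.mpr hpm
    have c2 : Nat.Coprime p (Nat.fib u) := hp.coprime_iff_not_dvd.mpr hd
    exact (Nat.Coprime.mul_right c1 (c2.pow_right _)).pow_left _
  exact h2 (hcop.dvd_of_dvd_mul_left hnat)

theorem stmt10 (p : ℕ) (hp : p.Prime) (hodd : Odd p)
    (αp αp2 : ℕ)
    (hαp : IsLeast {n : ℕ | 0 < n ∧ p ∣ Nat.fib n} αp)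
    (hαp2 : IsLeast {n : ℕ | 0 < n ∧ p ^ 2 ∣ Nat.fib n} αp2)
    (hne : αp2 ≠ αp) :
    ∀ s : ℕ, 1 ≤ s → ∀ αps : ℕ,
      IsLeast {n : ℕ | 0 < n ∧ p ^ s ∣ Nat.fib n} αps →
      αps = p ^ (s - 1) * αp := by
  have hα0 : 0 < αp := hαp.1.1
  have hpα : p ∣ Nat.fib αp := hαp.1.2
  have np2 : ¬ p^2 ∣ Nat.fib αp := by
    intro h
    have hd1 : αp2 ∣ αp := rank_dvd hαp2 hα0 h
    have hd2 : αp ∣ αp2 := by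
      refine rank_dvd hαp hαp2.1.1 ?_
      exact dvd_trans (dvd_pow_self p (by norm_num)) hαp2.1.2
    exact hne (Nat.dvd_antisymm hd1 hd2)
  -- the coprimality of fib (t-1) with p, given p ∣ fib t
  have hfibcop : ∀ u : ℕ, p ∣ Nat.fib (u+1) → ¬ p ∣ Nat.fib u := by
    intro u hpu hcon
    have hcop := Nat.fib_coprime_fib_succ u
    have : p ∣ Nat.gcd (Nat.fib u) (Nat.fib (u+1)) := Nat.dvd_gcd hcon hpu
    rw [hcop] at this
    exact hp.one_lt.ne' (Nat.dvd_one.mp this)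
  have main : ∀ s, 1 ≤ s →
      p^s ∣ Nat.fib (p^(s-1)*αp) ∧ ¬ p^(s+1) ∣ Nat.fib (p^(s-1)*αp) ∧
      ∀ n, 0 < n → p^s ∣ Nat.fib n → p^(s-1)*αp ∣ n := by
    intro s hs
    induction s, hs using Nat.le_induction with
    | base =>
      simp only [show (1:ℕ)-1 = 0 from rfl, pow_zero, one_mul, pow_one]
      refine ⟨hpα, ?_, ?_⟩
      · rw [show 1 + 1 = 2 from rfl]; exact np2
      · intro n hn hd
        exact rank_dvd hαp hn hd
    | succ s hs ih =>
      obtain ⟨ih1, ih2, ih3⟩ := ih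
      set t := p^(s-1)*αp with ht
      have ht0 : 0 < t := by
        have : 0 < p^(s-1) := pow_pos hp.pos _
        positivity
      obtain ⟨u, hu⟩ : ∃ u, t = u + 1 := ⟨t - 1, by omega⟩
      have hdu : ¬ p ∣ Nat.fib u := by
        apply hfibcop
        rw [← hu]
        exact dvd_trans (dvd_pow_self p (by omega)) ih1
      rw [hu] at ih1 ih2
      have hstep := step_up p s u hp hodd hs hdu ih1 ih2
      have hteq : p^(s+1-1)*αp = p*(u+1) := by
        rw [show s + 1 - 1 = s from rfl, ← hu, ht, ← mul_assoc, ← pow_succ']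
        congr 1
        congr 1
        omega
      refine ⟨?_, ?_, ?_⟩
      · rw [hteq]; exact hstep.1
      · rw [hteq, show s + 1 + 1 = s + 2 from rfl]; exact hstep.2
      · intro n hn hd
        have hd' : p^s ∣ Nat.fib n := dvd_trans (pow_dvd_pow p (by omega)) hd
        obtain ⟨m, hm⟩ := ih3 n hn hd'
        have hm0 : 0 < m := by
          rcases Nat.eq_zero_or_pos m with h | h
          · subst h; simp at hm; omega
          · exact h
        by_cases hpm : p ∣ m
        · obtain ⟨m', rfl⟩ := hpm
          rw [hteq]
          exact ⟨m', by rw [hm, hu]; ring⟩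
        · exfalso
          have := no_jump p s u m hp hs hm0 hpm hdu ih1 ih2
          rw [← hu, Nat.mul_comm m t, ← hm] at this
          exact this hd
  intro s hs αps hps
  obtain ⟨h1, h2, h3⟩ := main s hs
  have hleast : IsLeast {n : ℕ | 0 < n ∧ p ^ s ∣ Nat.fib n} (p^(s-1)*αp) := by
    constructor
    · exact ⟨Nat.mul_pos (pow_pos hp.pos _) hα0, h1⟩
    · intro n hn
      exact Nat.le_of_dvd hn.1 (h3 n hn.1 hn.2)
  exact hps.unique hleast
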